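/- Let (X,d) be a metric space and let {S_n} and S be nonempty compact subsets of X, all having the same finite cardinality k. Then the directed Hausdorff distance d⃗_H(S, S_n) → 0 if and only if d_H(S_n, S) → 0 in the (symmetric) Hausdorff metric. -/

import Mathlib

open Filter MeasureTheory Topology TopologicalSpace Metric Set

noncomputable section

/-- Directed Hausdorff distance `sup_{x ∈ S} inf_{x' ∈ T} d(x,x')`. -/
def dirHaus {X : Type*} [MetricSpace X] (S T : Set X) : ℝ :=
  ⨆ x ∈ S, infDist x T

/-- Kuratowski lower limit of a sequence of sets. -/
def KurLi {Y : Type*} [TopologicalSpace Y] (A : ℕ → Set Y) : Set Y :=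
  {x | ∀ U ∈ nhds x, ∀ᶠ n in atTop, (U ∩ A n).Nonempty}

/-- Kuratowski upper limit of a sequence of sets. -/
def KurLs {Y : Type*} [TopologicalSpace Y] (A : ℕ → Set Y) : Set Y :=
  {x | ∀ U ∈ nhds x, ∃ᶠ n in atTop, (U ∩ A n).Nonempty}

lemma dirHaus_nonneg {X : Type*} [MetricSpace X] (S T : Set X) : 0 ≤ dirHaus S T :=
  Real.iSup_nonneg fun x => Real.iSup_nonneg fun _ => infDist_nonneg

lemma dirHaus_le {X : Type*} [MetricSpace X] {S T : Set X} {r : ℝ} (hr : 0 ≤ r)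
    (h : ∀ x ∈ S, infDist x T ≤ r) : dirHaus S T ≤ r :=
  Real.iSup_le (fun x => Real.iSup_le (fun hx => h x hx) hr) hr

lemma le_dirHaus {X : Type*} [MetricSpace X] {S T : Set X} (hS : S.Finite) {x : X}
    (hx : x ∈ S) : infDist x T ≤ dirHaus S T := by
  have hbdd : BddAbove (range fun y => ⨆ _ : y ∈ S, infDist y T) := by
    apply (((hS.image (fun y => infDist y T)).insert 0).bddAbove).mono
    rintro _ ⟨y, rfl⟩
    by_cases hy : y ∈ S
    · simp only [hy, ciSup_unique]
      exact Or.inr ⟨y, hy, rfl⟩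
    · simp [hy]
  refine le_trans ?_ (le_ciSup hbdd x)
  exact le_ciSup (f := fun _ : x ∈ S => infDist x T) (Set.Finite.bddAbove (Set.finite_range _)) hx

lemma exists_sep {X : Type*} [MetricSpace X] {T : Set X} (hT : T.Finite) :
    ∃ δ > 0, ∀ x ∈ T, ∀ y ∈ T, x ≠ y → δ ≤ dist x y := by
  classical
  set D : Set ℝ := (fun p : X × X => dist p.1 p.2) '' {p ∈ T ×ˢ T | p.1 ≠ p.2} with hD
  have hDfin : D.Finite := Set.Finite.image _ (((hT.prod hT).subset (sep_subset _ _)))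
  rcases D.eq_empty_or_nonempty with hE | hNE
  · refine ⟨1, one_pos, fun x hx y hy hxy => ?_⟩
    have hmem : dist x y ∈ D := ⟨(x, y), ⟨Set.mk_mem_prod hx hy, hxy⟩, rfl⟩
    simp [hE] at hmem
  · obtain ⟨δ, hδD, hδmin⟩ := hDfin.exists_minimalFor id D hNE
    refine ⟨δ, ?_, fun x hx y hy hxy => ?_⟩
    · obtain ⟨p, ⟨-, hp⟩, rfl⟩ := hδD
      exact dist_pos.mpr hp
    · have hmem : dist x y ∈ D := ⟨(x, y), ⟨Set.mk_mem_prod hx hy, hxy⟩, rfl⟩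
      by_contra h
      push_neg at h
      have := hδmin hmem h.le
      simp only [id] at this
      linarith

/-- For sets of the same finite cardinality `k ≥ 1`, lower Hausdorff convergence is
equivalent to convergence in the Hausdorff metric. -/
theorem stmt3 {X : Type*} [MetricSpace X] (S : ℕ → Set X) (T : Set X) (k : ℕ) (hk : 1 ≤ k)
    (hSfin : ∀ n, (S n).Finite) (hScard : ∀ n, (S n).ncard = k)
    (hTfin : T.Finite) (hTcard : T.ncard = k) :
    Tendsto (fun n => dirHaus T (S n)) atTop (𝓝 0) ↔
      Tendsto (fun n => hausdorffDist (S n) T) atTop (𝓝 0) := by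
  classical
  have hTne : T.Nonempty := Set.nonempty_of_ncard_ne_zero (by omega)
  have hSne : ∀ n, (S n).Nonempty := fun n =>
    Set.nonempty_of_ncard_ne_zero (by rw [hScard]; omega)
  have hfin : ∀ n, EMetric.hausdorffEdist (S n) T ≠ ⊤ := fun n =>
    hausdorffEdist_ne_top_of_nonempty_of_bounded (hSne n) hTne
      (hSfin n).isBounded hTfin.isBounded
  constructor
  · intro h
    obtain ⟨δ, hδ, hsep⟩ := exists_sep hTfin
    rw [Metric.tendsto_atTop] at h ⊢
    intro ε hε
    set ε' := min (ε / 2) (δ / 3) with hε'def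
    have hε'pos : 0 < ε' := lt_min (by linarith) (by linarith)
    obtain ⟨N, hN⟩ := h ε' hε'pos
    refine ⟨N, fun n hn => ?_⟩
    have hd : dirHaus T (S n) < ε' := by
      have := hN n hn
      rwa [Real.dist_0_eq_abs, abs_of_nonneg (dirHaus_nonneg _ _)] at this
    have key : ∀ t ∈ T, ∃ y ∈ S n, dist t y < ε' := by
      intro t ht
      obtain ⟨y, hy, hdy⟩ := (hSfin n).isCompact.exists_infDist_eq_dist (hSne n) t
      exact ⟨y, hy, hdy ▸ lt_of_le_of_lt (le_dirHaus hTfin ht) hd⟩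
    choose! f hf1 hf2 using key
    have hmaps : MapsTo f T (S n) := fun t ht => hf1 t ht
    have hinj : InjOn f T := by
      intro a ha b hb hab
      by_contra hne
      have h1 : dist a b ≤ dist a (f a) + dist (f b) b := by
        calc dist a b ≤ dist a (f a) + dist (f a) b := dist_triangle _ _ _
        _ = dist a (f a) + dist (f b) b := by rw [hab, dist_comm]
      have h2 : δ ≤ dist a b := hsep a ha b hb hne
      have h3 : dist a (f a) < ε' := hf2 a ha
      have h4 : dist (f b) b < ε' := by rw [dist_comm]; exact hf2 b hb
      have h5 : ε' ≤ δ / 3 := min_le_right _ _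
      linarith
    have himg : f '' T = S n :=
      Set.eq_of_subset_of_ncard_le (Set.mapsTo_iff_image_subset.mp hmaps)
        (by rw [Set.ncard_image_of_injOn hinj, hTcard, hScard]) (hSfin n)
    have H1 : ∀ x ∈ S n, ∃ y ∈ T, dist x y ≤ ε' := by
      intro x hx
      obtain ⟨t, ht, rfl⟩ := himg ▸ hx
      exact ⟨t, ht, by rw [dist_comm]; exact (hf2 t ht).le⟩
    have H2 : ∀ x ∈ T, ∃ y ∈ S n, dist x y ≤ ε' := fun t ht =>
      ⟨f t, hf1 t ht, (hf2 t ht).le⟩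
    have hle : hausdorffDist (S n) T ≤ ε' := hausdorffDist_le_of_mem_dist hε'pos.le H1 H2
    rw [Real.dist_0_eq_abs, abs_of_nonneg hausdorffDist_nonneg]
    calc hausdorffDist (S n) T ≤ ε' := hle
      _ ≤ ε / 2 := min_le_left _ _
      _ < ε := by linarith
  · intro h
    refine squeeze_zero (fun n => dirHaus_nonneg _ _) (fun n => ?_) h
    refine dirHaus_le hausdorffDist_nonneg fun x hx => ?_
    rw [hausdorffDist_comm]
    exact infDist_le_hausdorffDist_of_mem hx
      (by rw [EMetric.hausdorffEdist_comm]; exact hfin n)
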